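/- Let U ⊆ ℂ be open, let ψ : U → ℂ be holomorphic, and let L : U → ℂ be holomorphic with exp(L(w)) equal to the derivative ψ'(w) for every w ∈ U. Fix χ > 0, θ ∈ ℝ, and a function h : ψ(U) → ℝ. Let I ⊆ ℝ be an interval and let η̃ : I → U be differentiable, and suppose that the curve η := ψ ∘ η̃ satisfies η'(t) = exp(i(h(η(t))/χ + θ)) for all t ∈ I. Define h̃ : U → ℝ by h̃ := h ∘ ψ − χ·Im L. Then for all t ∈ I one has η̃'(t) = exp(−Re L(η̃(t)))·exp(i(h̃(η̃(t))/χ + θ)); in particular η̃'(t) ≠ 0 and η̃'(t)/|η̃'(t)| = exp(i(h̃(η̃(t))/χ + θ)). -/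

import Mathlib

open Complex

/-- The chain-rule computation behind the conformal coordinate-change rule
`(D, h) → (ψ⁻¹(D), h∘ψ − χ·arg ψ')` for imaginary surfaces: if `η = ψ ∘ η̃` is a flow
line of `h` with angle `θ` (for the vector field `exp(i(h/χ + θ))`), `ψ` is holomorphic
on `U` with derivative `ψ' = exp ∘ L` for a holomorphic branch `L` of `log ψ'`, then the
derivative of `η̃` equals `exp(−Re L(η̃ t)) · exp(i(h̃(η̃ t)/χ + θ))` where
`h̃ = h ∘ ψ − χ · Im L`; in particular it is nonzero and its unit tangent is
`exp(i(h̃(η̃ t)/χ + θ))`. -/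
theorem flow_line_coordinate_change (U : Set ℂ) (hU : IsOpen U)
    (ψ ψ' L : ℂ → ℂ)
    (hψ : ∀ w ∈ U, HasDerivAt ψ (ψ' w) w)
    (hL : DifferentiableOn ℂ L U)
    (hexpL : ∀ w ∈ U, Complex.exp (L w) = ψ' w)
    (χ θ : ℝ) (hχ : 0 < χ)
    (h : ℂ → ℝ)
    (I : Set ℝ) (hI : I.OrdConnected)
    (η' η'deriv : ℝ → ℂ)
    (hmem : ∀ t ∈ I, η' t ∈ U)
    (hη' : ∀ t ∈ I, HasDerivAt η' (η'deriv t) t)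
    (hflow : ∀ t ∈ I, HasDerivAt (fun s => ψ (η' s))
      (Complex.exp (Complex.I * ((h (ψ (η' t)) / χ + θ : ℝ) : ℂ))) t) :
    ∀ t ∈ I,
      η'deriv t = Complex.exp (-((L (η' t)).re : ℂ)) *
        Complex.exp (Complex.I *
          (((h (ψ (η' t)) - χ * (L (η' t)).im) / χ + θ : ℝ) : ℂ)) ∧
      η'deriv t ≠ 0 ∧
      η'deriv t / ((‖η'deriv t‖ : ℝ) : ℂ) =
        Complex.exp (Complex.I *
          (((h (ψ (η' t)) - χ * (L (η' t)).im) / χ + θ : ℝ) : ℂ)) := by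

  intro t ht
  have hc : HasDerivAt (fun s => ψ (η' s)) (ψ' (η' t) * η'deriv t) t :=
    (hψ _ (hmem t ht)).comp t (hη' t ht)
  have key : ψ' (η' t) * η'deriv t
      = Complex.exp (Complex.I * ((h (ψ (η' t)) / χ + θ : ℝ) : ℂ)) :=
    hc.unique (hflow t ht)
  have hψ'ne : ψ' (η' t) ≠ 0 := by
    rw [← hexpL _ (hmem t ht)]; exact Complex.exp_ne_zero _
  have hd : η'deriv t
      = Complex.exp (Complex.I * ((h (ψ (η' t)) / χ + θ : ℝ) : ℂ) - L (η' t)) := by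
    rw [Complex.exp_sub, hexpL _ (hmem t ht), eq_div_iff hψ'ne, mul_comm, key]
  have hLsplit : L (η' t) = ((L (η' t)).re : ℂ) + ((L (η' t)).im : ℂ) * Complex.I :=
    (Complex.re_add_im _).symm
  have hmain : η'deriv t = Complex.exp (-((L (η' t)).re : ℂ)) *
      Complex.exp (Complex.I *
        (((h (ψ (η' t)) - χ * (L (η' t)).im) / χ + θ : ℝ) : ℂ)) := by
    have harg : ((h (ψ (η' t)) - χ * (L (η' t)).im) / χ + θ : ℝ)
        = (h (ψ (η' t)) / χ + θ) - (L (η' t)).im := by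
      field_simp
      ring
    rw [hd, ← Complex.exp_add, harg]
    congr 1
    push_cast
    linear_combination -hLsplit
  refine ⟨hmain, ?_, ?_⟩
  · rw [hmain]
    exact mul_ne_zero (Complex.exp_ne_zero _) (Complex.exp_ne_zero _)
  · have habs : ((‖η'deriv t‖ : ℝ) : ℂ) = Complex.exp (-((L (η' t)).re : ℂ)) := by
      rw [hmain, norm_mul, Complex.norm_exp, Complex.norm_exp]
      push_cast
      simp [Complex.exp_ofReal_re]
    rw [habs, hmain, mul_comm, mul_div_assoc, div_self (Complex.exp_ne_zero _), mul_one]
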